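/- The space Spc(K) is noetherian if and only if every Zariski-closed subset of Spc(K) is the support supp(a) of some object a of K. -/

import Mathlib

open CategoryTheory CategoryTheory.Limits CategoryTheory.Pretriangulated
open CategoryTheory.MonoidalCategory
open ZeroObject

universe v u

variable (C : Type u) [Category.{v} C] [Preadditive C] [HasZeroObject C]
  [HasShift C ℤ] [∀ n : ℤ, (shiftFunctor C n).Additive] [Pretriangulated C]
  [HasBinaryBiproducts C] [MonoidalCategory C] [SymmetricCategory C]

/-- A thick tensor-ideal: a class of objects closed under isomorphism, containing 0,
satisfying two-out-of-three for distinguished triangles, closed under direct summands,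
and closed under tensoring (on either side) with arbitrary objects. -/
structure IsThickTensorIdeal (J : Set C) : Prop where
  iso_closed : ∀ {a b : C}, (a ≅ b) → a ∈ J → b ∈ J
  zero_mem : (0 : C) ∈ J
  tri₃ : ∀ T : Triangle C, T ∈ (distTriang C) → T.obj₁ ∈ J → T.obj₂ ∈ J → T.obj₃ ∈ J
  tri₂ : ∀ T : Triangle C, T ∈ (distTriang C) → T.obj₁ ∈ J → T.obj₃ ∈ J → T.obj₂ ∈ J
  tri₁ : ∀ T : Triangle C, T ∈ (distTriang C) → T.obj₂ ∈ J → T.obj₃ ∈ J → T.obj₁ ∈ J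
  thick : ∀ a b : C, (a ⊞ b) ∈ J → a ∈ J ∧ b ∈ J
  ideal_right : ∀ a b : C, a ∈ J → a ⊗ b ∈ J
  ideal_left : ∀ a b : C, a ∈ J → b ⊗ a ∈ J

/-- A prime thick tensor-ideal. -/
structure IsPrimeIdeal (P : Set C) extends IsThickTensorIdeal C P : Prop where
  proper : P ≠ Set.univ
  prime : ∀ a b : C, a ⊗ b ∈ P → a ∈ P ∨ b ∈ P

/-- The Balmer spectrum: the set of prime thick tensor-ideals. -/
def SpcK : Type _ := {P : Set C // IsPrimeIdeal C P}

/-- The support of an object. -/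
def suppK (a : C) : Set (SpcK C) := {P | a ∉ P.1}

/-- The Zariski topology, generated by the basic open sets U(a) = {P | a ∈ P}. -/
instance : TopologicalSpace (SpcK C) :=
  TopologicalSpace.generateFrom {U | ∃ a : C, U = {P : SpcK C | a ∈ P.1}}

/-- A tensor-multiplicative collection of objects. -/
def IsMult (S : Set C) : Prop := 𝟙_ C ∈ S ∧ ∀ a ∈ S, ∀ b ∈ S, a ⊗ b ∈ S

/-- The smallest thick tensor-ideal containing `E`. -/
def genIdeal (E : Set C) : Set C := ⋂₀ {J : Set C | IsThickTensorIdeal C J ∧ E ⊆ J}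

/-- The n-fold tensor power of an object (with `tpow a 1 = a`). -/
def tpow (a : C) : ℕ → C
  | 0 => 𝟙_ C
  | 1 => a
  | n+2 => tpow a (n+1) ⊗ a

set_option linter.unusedSectionVars false
-- tests
lemma unit_not_mem (P : SpcK C) : 𝟙_ C ∉ P.1 := by
  intro h
  apply P.2.proper
  ext c
  simp only [Set.mem_univ, iff_true]
  exact P.2.iso_closed (λ_ c) (P.2.ideal_right _ c h)

lemma biprod_mem_iff (P : SpcK C) (a b : C) : (a ⊞ b) ∈ P.1 ↔ a ∈ P.1 ∧ b ∈ P.1 := by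
  constructor
  · exact fun h => P.2.thick a b h
  · rintro ⟨ha, hb⟩
    exact P.2.tri₂ _ (binaryBiproductTriangle_distinguished a b) ha hb

lemma tensor_mem_iff (P : SpcK C) (a b : C) : a ⊗ b ∈ P.1 ↔ a ∈ P.1 ∨ b ∈ P.1 :=
  ⟨P.2.prime a b, fun h => h.elim (fun h => P.2.ideal_right a b h) (fun h => P.2.ideal_left b a h)⟩

lemma isOpen_basic (a : C) : IsOpen {P : SpcK C | a ∈ P.1} :=
  TopologicalSpace.GenerateOpen.basic _ ⟨a, rfl⟩

lemma basisK : TopologicalSpace.IsTopologicalBasis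
    {U : Set (SpcK C) | ∃ a : C, U = {P : SpcK C | a ∈ P.1}} := by
  refine ⟨?_, ?_, rfl⟩
  · rintro t₁ ⟨a, rfl⟩ t₂ ⟨b, rfl⟩ P ⟨hPa, hPb⟩
    refine ⟨{P : SpcK C | (a ⊞ b) ∈ P.1}, ⟨a ⊞ b, rfl⟩, (biprod_mem_iff C P a b).2 ⟨hPa, hPb⟩, ?_⟩
    intro Q hQ
    exact (biprod_mem_iff C Q a b).1 hQ
  · apply Set.eq_univ_of_forall
    intro P
    exact ⟨{P : SpcK C | (0 : C) ∈ P.1}, ⟨0, rfl⟩, P.2.zero_mem⟩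

lemma mainK {ι : Type*} (a : C) (b : ι → C)
    (h : {P : SpcK C | a ∈ P.1} ⊆ ⋃ i, {P : SpcK C | b i ∈ P.1}) :
    ∃ J : Finset ι, {P : SpcK C | a ∈ P.1} ⊆ ⋃ i ∈ J, {P : SpcK C | b i ∈ P.1} := by
  by_contra hc
  push_neg at hc
  have hP : ∀ J : Finset ι, ∃ P : SpcK C, a ∈ P.1 ∧ ∀ i ∈ J, b i ∉ P.1 := by
    intro J
    obtain ⟨P, hP1, hP2⟩ := Set.not_subset.1 (hc J)
    exact ⟨P, hP1, fun i hi hbi => hP2 (Set.mem_biUnion hi hbi)⟩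
  choose P hPa hPb using hP
  haveI := Classical.decEq ι
  haveI : Nonempty (Finset ι) := ⟨∅⟩
  set Φ := Ultrafilter.of (Filter.atTop : Filter (Finset ι)) with hΦ
  have hmem : ∀ s : Set (Finset ι), s ∈ (Filter.atTop : Filter (Finset ι)) → s ∈ Φ :=
    fun s hs => Ultrafilter.of_le _ hs
  have mono : ∀ {s t : Set (Finset ι)}, s ⊆ t → s ∈ Φ → t ∈ Φ :=
    fun hst hs => Filter.mem_of_superset hs hst
  set Q : Set C := {c | {J : Finset ι | c ∈ (P J).1} ∈ Φ} with hQdef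
  have hQmem : ∀ c : C, c ∈ Q ↔ {J : Finset ι | c ∈ (P J).1} ∈ Φ := fun c => Iff.rfl
  have hQI : IsPrimeIdeal C Q := by
    refine ⟨⟨?_, ?_, ?_, ?_, ?_, ?_, ?_, ?_⟩, ?_, ?_⟩
    · intro x y e hx
      exact mono (fun J hJ => (P J).2.iso_closed e hJ) hx
    · exact Filter.univ_mem' fun J => (P J).2.zero_mem
    · intro T hT h1 h2
      exact mono (fun J hJ => (P J).2.tri₃ T hT hJ.1 hJ.2) (Filter.inter_mem h1 h2)
    · intro T hT h1 h3
      exact mono (fun J hJ => (P J).2.tri₂ T hT hJ.1 hJ.2) (Filter.inter_mem h1 h3)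
    · intro T hT h2 h3
      exact mono (fun J hJ => (P J).2.tri₁ T hT hJ.1 hJ.2) (Filter.inter_mem h2 h3)
    · intro x y hxy
      exact ⟨mono (fun J hJ => ((P J).2.thick x y hJ).1) hxy,
             mono (fun J hJ => ((P J).2.thick x y hJ).2) hxy⟩
    · intro x y hx
      exact mono (fun J hJ => (P J).2.ideal_right x y hJ) hx
    · intro x y hx
      exact mono (fun J hJ => (P J).2.ideal_left x y hJ) hx
    · intro he
      have h1 : 𝟙_ C ∈ Q := he ▸ Set.mem_univ _
      have h2 : {J : Finset ι | 𝟙_ C ∈ (P J).1} = ∅ := by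
        ext J
        simp [unit_not_mem C (P J)]
      rw [hQmem, h2] at h1
      exact Φ.neBot.ne (Filter.empty_mem_iff_bot.1 h1)
    · intro x y hxy
      have : {J : Finset ι | x ∈ (P J).1} ∪ {J : Finset ι | y ∈ (P J).1} ∈ Φ :=
        mono (fun J hJ => (P J).2.prime x y hJ) hxy
      exact (Ultrafilter.union_mem_iff (f := Φ)).1 this
  have haQ : a ∈ Q := Filter.univ_mem' fun J => hPa J
  obtain ⟨i, hbiQ⟩ := Set.mem_iUnion.1 (h (show (⟨Q, hQI⟩ : SpcK C) ∈ _ from haQ))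
  have h1 : {J : Finset ι | i ∈ J} ∈ Φ := by
    apply hmem
    exact Filter.mem_of_superset (Filter.mem_atTop ({i} : Finset ι))
      (fun J hJ => Finset.mem_of_subset hJ (Finset.mem_singleton_self i))
  have h2 : {J : Finset ι | b i ∈ (P J).1} ∈ Φ := hbiQ
  have : (∅ : Set (Finset ι)) ∈ Φ := by
    refine Filter.mem_of_superset (Filter.inter_mem h1 h2) ?_
    rintro J ⟨hJ1, hJ2⟩
    exact absurd hJ2 (hPb J i hJ1)
  exact Φ.neBot.ne (Filter.empty_mem_iff_bot.1 this)

lemma basic_compact (a : C) : IsCompact {P : SpcK C | a ∈ P.1} := by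
  classical
  apply isCompact_of_finite_subcover
  intro ι V hV hcov
  have hcov' : {P : SpcK C | a ∈ P.1} ⊆
      ⋃ c : {c : C // ∃ i, {P : SpcK C | c ∈ P.1} ⊆ V i}, {P : SpcK C | c.1 ∈ P.1} := by
    intro P hP
    obtain ⟨i, hPi⟩ := Set.mem_iUnion.1 (hcov hP)
    obtain ⟨W, ⟨c, rfl⟩, hPW, hWV⟩ := (basisK C).exists_subset_of_mem_open hPi (hV i)
    exact Set.mem_iUnion.2 ⟨⟨c, i, hWV⟩, hPW⟩
  obtain ⟨J, hJ⟩ := mainK C a (fun c : {c : C // ∃ i, {P : SpcK C | c ∈ P.1} ⊆ V i} => c.1) hcov'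
  choose idx hidx using fun c : {c : C // ∃ i, {P : SpcK C | c ∈ P.1} ⊆ V i} => c.2
  refine ⟨J.image idx, hJ.trans ?_⟩
  intro P hP
  obtain ⟨c, hcJ, hPc⟩ := Set.mem_iUnion₂.1 hP
  exact Set.mem_iUnion₂.2 ⟨idx c, Finset.mem_image_of_mem idx hcJ, hidx c hPc⟩

lemma supp_tensor (a b : C) : suppK C (a ⊗ b) = suppK C a ∩ suppK C b := by
  ext P
  simp only [suppK, Set.mem_setOf_eq, Set.mem_inter_iff, tensor_mem_iff C P a b]
  tauto

lemma finset_inter_supp {ι : Type*} (b : ι → C) (t : Finset ι) :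
    ∃ c : C, (⋂ i ∈ t, suppK C (b i)) = suppK C c := by
  classical
  induction t using Finset.induction with
  | empty =>
    refine ⟨𝟙_ C, ?_⟩
    ext P
    simp [suppK, unit_not_mem C P]
  | insert _ _ hni ih =>
    obtain ⟨c, hc⟩ := ih
    rename_i i t'
    refine ⟨b i ⊗ c, ?_⟩
    rw [Finset.set_biInter_insert, hc, supp_tensor]


/-- Corollary 2.17: the spectrum is noetherian iff every closed subset is the
support of an object. -/
theorem noetherian_iff_supports :
    TopologicalSpace.NoetherianSpace (SpcK C) ↔
      ∀ Z : Set (SpcK C), IsClosed Z → ∃ a : C, Z = suppK C a := by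
  constructor
  · intro hN Z hZ
    obtain ⟨S, hSB, hSU⟩ := (basisK C).open_eq_sUnion hZ.isOpen_compl
    have hcov : Zᶜ ⊆ ⋃ s : S, (s : Set (SpcK C)) := by
      rw [hSU, Set.sUnion_eq_iUnion]
    obtain ⟨t, ht⟩ := (TopologicalSpace.NoetherianSpace.isCompact Zᶜ).elim_finite_subcover
      (fun s : S => (s : Set (SpcK C))) (fun s => (basisK C).isOpen (hSB s.2)) hcov
    choose obj hobj using fun s : S => hSB s.2
    have hZeq : Zᶜ = ⋃ s ∈ t, (s : Set (SpcK C)) := by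
      apply Set.Subset.antisymm ht
      rw [hSU]
      exact Set.iUnion₂_subset fun s _ => Set.subset_sUnion_of_mem s.2
    obtain ⟨c, hc⟩ := finset_inter_supp C (fun s : S => obj s) t
    refine ⟨c, ?_⟩
    rw [← hc, ← compl_compl Z, hZeq, Set.compl_iUnion₂]
    apply Set.iInter₂_congr
    intro s hs
    rw [hobj s]
    rfl
  · intro H
    rw [TopologicalSpace.noetherianSpace_iff_opens]
    intro s
    obtain ⟨a, ha⟩ := H (↑s)ᶜ (isClosed_compl_iff.2 s.2)
    have hs : (s : Set (SpcK C)) = {P : SpcK C | a ∈ P.1} := by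
      rw [← compl_compl (s : Set (SpcK C)), ha]
      ext P
      simp [suppK]
    rw [hs]
    exact basic_compact C a
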